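/- Let n, d ∈ ℕ with d ≥ 1 and n ≥ d + 1, and let A = A_{n,d} be the signed adjacency matrix of the Johnson graph J(n,d). Then A² = (n − 2d)·A + d(n − d)·I, and the rank of A + d·I equals C(n−1, d−1). Consequently the eigenvalues of A are −d with multiplicity C(n−1, d) and n − d with multiplicity C(n−1, d−1); in particular A is a matrix in S(J(n,d)) with entries in {0, 1, −1} having exactly two distinct eigenvalues, so q(J(n,d)) = 2. -/

import Mathlib

open Matrix Polynomial

/-- `S(G)`: real symmetric matrices whose off-diagonal zero/nonzero pattern
matches the adjacency of `G`; the diagonal is unconstrained. -/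
def Sset {V : Type*} [Fintype V] [DecidableEq V] (G : SimpleGraph V) : Set (Matrix V V ℝ) :=
  {M | M.IsSymm ∧ ∀ u v : V, u ≠ v → (M u v ≠ 0 ↔ G.Adj u v)}

/-- `q(G)`: the minimum number of distinct eigenvalues over matrices in `S(G)`. -/
noncomputable def minQ {V : Type*} [Fintype V] [DecidableEq V] (G : SimpleGraph V) : ℕ :=
  sInf {k : ℕ | ∃ M ∈ Sset G, (spectrum ℝ M).ncard = k}

/-- The Johnson graph `J(n,d)`: vertices are the `d`-element subsets of an `n`-set,
adjacent iff their symmetric difference has two elements. -/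
def Johnson (n d : ℕ) : SimpleGraph {s : Finset (Fin n) // s.card = d} where
  Adj α β := (symmDiff α.1 β.1).card = 2
  symm := ⟨fun a b h => by rwa [symmDiff_comm]⟩
  loopless := ⟨fun a h => by simp [symmDiff_self] at h⟩

/-- For `d`-subsets `α, β` with `α ∆ β = {i, j}`, `i < j`, this is
`h(α,β) = |{ℓ ∈ α ∩ β : i < ℓ < j}|`. -/
def hjExp {n : ℕ} (α β : Finset (Fin n)) : ℕ :=
  ((α ∩ β).filter (fun l => (∃ i ∈ symmDiff α β, i < l) ∧ ∃ j ∈ symmDiff α β, l < j)).card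

/-- The signed adjacency matrix `A_{n,d}` of the Johnson graph `J(n,d)`:
`A(α,β) = (-1)^{h(α,β)}` when `|α ∆ β| = 2` and `0` otherwise. -/
def Ajohnson (n d : ℕ) :
    Matrix {s : Finset (Fin n) // s.card = d} {s : Finset (Fin n) // s.card = d} ℝ :=
  fun α β => if (symmDiff α.1 β.1).card = 2 then (-1 : ℝ) ^ hjExp α.1 β.1 else 0

/-- The matrix `W_{n,d}`, rows indexed by `d`-subsets and columns by `(d+1)`-subsets of
an `n`-set: `W(α,β) = (-1)^{|{y ∈ β : y < x}|}` when `α ⊆ β` with `β \ α = {x}`, else `0`. -/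
def Wj (n d : ℕ) :
    Matrix {s : Finset (Fin n) // s.card = d} {s : Finset (Fin n) // s.card = d + 1} ℝ :=
  fun α β => if α.1 ⊆ β.1 then
      (-1 : ℝ) ^ ((β.1.filter (fun y => ∃ x ∈ β.1 \ α.1, y < x)).card)
    else 0

/-- `P_{n,d} := W_{n,d} · W_{n,d}ᵀ`. -/
noncomputable def Pj (n d : ℕ) := Wj n d * (Wj n d)ᵀ

open Finset

section Comb

variable {n : ℕ}

lemma count_core (u v : Fin n) (T : Finset (Fin n)) (hu : u ∉ T) (hv : v ∉ T) :
    #(T.filter (fun l => l < u)) + #(T.filter (fun l => l < v))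
    = 2 * #(T.filter (fun l => l < u ∧ l < v))
      + #(T.filter (fun l => (u < l ∨ v < l) ∧ (l < u ∨ l < v))) := by
  classical
  induction T using Finset.induction_on with
  | empty => simp
  | @insert a T ha ih =>
    have hau : a ≠ u := fun h => hu (h ▸ Finset.mem_insert_self a T)
    have hav : a ≠ v := fun h => hv (h ▸ Finset.mem_insert_self a T)
    have hu' : u ∉ T := fun h => hu (Finset.mem_insert_of_mem h)
    have hv' : v ∉ T := fun h => hv (Finset.mem_insert_of_mem h)
    specialize ih hu' hv'
    rw [Finset.filter_insert, Finset.filter_insert, Finset.filter_insert, Finset.filter_insert]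
    have hnm : ∀ p : Fin n → Prop, ∀ _ : DecidablePred p, a ∉ T.filter p :=
      fun p _ h => ha (Finset.mem_filter.mp h).1
    have hau' : (a : ℕ) ≠ (u : ℕ) := fun h => hau (Fin.ext h)
    have hav' : (a : ℕ) ≠ (v : ℕ) := fun h => hav (Fin.ext h)
    simp only [Fin.lt_def] at *
    split_ifs <;>
      (try simp only [Finset.card_insert_of_notMem (hnm _ _)]) <;> omega

/-- the sign count with a two-sided symmetric difference -/
lemma neg_one_pow_count (u v : Fin n) (T : Finset (Fin n)) (hu : u ∉ T) (hv : v ∉ T) :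
    (-1 : ℝ) ^ (#(T.filter (fun l => l < u)) + #(T.filter (fun l => l < v)))
    = (-1 : ℝ) ^ #(T.filter (fun l => (u < l ∨ v < l) ∧ (l < u ∨ l < v))) := by
  rw [count_core u v T hu hv, pow_add, pow_mul, neg_one_sq, one_pow, one_mul]

lemma sdiff_card_pair {α β : Finset (Fin n)} (hcard : α.card = β.card)
    (h2 : (symmDiff α β).card = 2) :
    ∃ u v, u ≠ v ∧ α \ β = {u} ∧ β \ α = {v} := by
  classical
  have hd : Disjoint (α \ β) (β \ α) := disjoint_sdiff_sdiff
  have hsd : symmDiff α β = (α \ β) ∪ (β \ α) := by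
    rw [symmDiff_def, Finset.sup_eq_union]
  have hcup : #(α \ β) + #(β \ α) = 2 := by
    rw [← Finset.card_union_of_disjoint hd, ← hsd, h2]
  have h1 : #(α ∩ β) + #(α \ β) = #α := Finset.card_inter_add_card_sdiff α β
  have h1' : #(β ∩ α) + #(β \ α) = #β := Finset.card_inter_add_card_sdiff β α
  rw [Finset.inter_comm] at h1'
  have hab : #(α \ β) = 1 := by omega
  have hba : #(β \ α) = 1 := by omega
  obtain ⟨u, hu⟩ := Finset.card_eq_one.mp hab
  obtain ⟨v, hv⟩ := Finset.card_eq_one.mp hba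
  refine ⟨u, v, ?_, hu, hv⟩
  intro huv
  have h3 : u ∈ α \ β := by rw [hu]; exact Finset.mem_singleton_self u
  have h4 : v ∈ β \ α := by rw [hv]; exact Finset.mem_singleton_self v
  rw [Finset.mem_sdiff] at h3 h4
  exact h4.2 (huv ▸ h3.1)

lemma eq_insert_of_sdiff {α β : Finset (Fin n)} {u : Fin n} (h : α \ β = {u}) :
    α = insert u (α ∩ β) := by
  have huα : u ∈ α \ β := by rw [h]; exact Finset.mem_singleton_self u
  rw [Finset.mem_sdiff] at huα
  ext a
  simp only [Finset.mem_insert, Finset.mem_inter]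
  constructor
  · intro ha
    by_cases hb : a ∈ β
    · exact Or.inr ⟨ha, hb⟩
    · left
      have : a ∈ α \ β := Finset.mem_sdiff.mpr ⟨ha, hb⟩
      rw [h] at this; exact Finset.mem_singleton.mp this
  · rintro (rfl | ⟨h1, _⟩)
    · exact huα.1
    · exact h1

lemma filter_exists_eq {α T : Finset (Fin n)} {w : Fin n} (h : α \ T = {w}) :
    α.filter (fun y => ∃ x ∈ α \ T, y < x) = α.filter (fun y => y < w) := by
  rw [h]
  apply Finset.filter_congr
  intro y _
  simp

lemma card_filter_insert (T : Finset (Fin n)) (u : Fin n) (hu : u ∉ T)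
    (p : Fin n → Prop) [DecidablePred p] :
    #((insert u T).filter p) = #(T.filter p) + if p u then 1 else 0 := by
  rw [Finset.filter_insert]
  split_ifs with h
  · rw [Finset.card_insert_of_notMem (fun hmem => hu (Finset.mem_filter.mp hmem).1)]
  · rw [add_zero]

lemma card_sub_subsets (α : Finset (Fin n)) (e : ℕ) (hα : α.card = e + 1) :
    #((univ : Finset {s : Finset (Fin n) // s.card = e}).filter (fun γ => γ.1 ⊆ α)) = e + 1 := by
  classical
  have hb : #((univ : Finset {s : Finset (Fin n) // s.card = e}).filter (fun γ => γ.1 ⊆ α))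
      = #(Finset.powersetCard e α) := by
    apply Finset.card_bij (fun γ _ => γ.1)
    · intro γ hγ
      rw [Finset.mem_powersetCard]
      exact ⟨(Finset.mem_filter.mp hγ).2, γ.2⟩
    · intro γ1 _ γ2 _ h
      exact Subtype.ext h
    · intro s hs
      rw [Finset.mem_powersetCard] at hs
      exact ⟨⟨s, hs.2⟩, Finset.mem_filter.mpr ⟨Finset.mem_univ _, hs.1⟩, rfl⟩
  rw [hb, Finset.card_powersetCard, hα, Nat.choose_succ_self_right]

lemma card_sup_subsets (α : Finset (Fin n)) (e : ℕ) (hα : α.card = e + 1) :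
    #((univ : Finset {s : Finset (Fin n) // s.card = e + 1 + 1}).filter (fun δ => α ⊆ δ.1))
      = n - (e + 1) := by
  classical
  have hb : #((univ : Finset {s : Finset (Fin n) // s.card = e + 1 + 1}).filter
        (fun δ => α ⊆ δ.1)) = #(Finset.powersetCard 1 αᶜ) := by
    apply Finset.card_bij (fun δ _ => δ.1 \ α)
    · intro δ hδ
      have hsub : α ⊆ δ.1 := (Finset.mem_filter.mp hδ).2
      rw [Finset.mem_powersetCard]
      constructor
      · intro x hx
        rw [Finset.mem_sdiff] at hx
        exact Finset.mem_compl.mpr hx.2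
      · rw [Finset.card_sdiff_of_subset hsub, δ.2, hα]; omega
    · intro δ1 hδ1 δ2 hδ2 h
      have h1 : α ⊆ δ1.1 := (Finset.mem_filter.mp hδ1).2
      have h2 : α ⊆ δ2.1 := (Finset.mem_filter.mp hδ2).2
      apply Subtype.ext
      rw [← Finset.union_sdiff_of_subset h1, ← Finset.union_sdiff_of_subset h2, h]
    · intro s hs
      rw [Finset.mem_powersetCard] at hs
      have hdisj : Disjoint α s := by
        rw [Finset.disjoint_right]
        intro x hx
        exact Finset.mem_compl.mp (hs.1 hx)
      have hcard : #(α ∪ s) = e + 1 + 1 := by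
        rw [Finset.card_union_of_disjoint hdisj, hα, hs.2]
      refine ⟨⟨α ∪ s, hcard⟩, Finset.mem_filter.mpr ⟨Finset.mem_univ _,
        Finset.subset_union_left⟩, ?_⟩
      rw [Finset.union_sdiff_cancel_left hdisj]
  rw [hb, Finset.card_powersetCard, Nat.choose_one_right, Finset.card_compl, hα,
    Fintype.card_fin]
end Comb

section Keys
variable {n : ℕ}

lemma wj_apply_pair {e : ℕ} (γ : {s : Finset (Fin n) // s.card = e})
    (α : {s : Finset (Fin n) // s.card = e + 1}) (w : Fin n)
    (hsub : γ.1 ⊆ α.1) (hsd : α.1 \ γ.1 = {w}) (hw : w ∉ γ.1) :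
    Wj n e γ α = (-1 : ℝ) ^ #(γ.1.filter (fun y => y < w)) := by
  unfold Wj
  rw [if_pos hsub]
  congr 1
  rw [filter_exists_eq hsd]
  have hins : α.1 = insert w γ.1 := by
    rw [← Finset.union_sdiff_of_subset hsub, hsd, Finset.union_comm, ← Finset.insert_eq]
  rw [hins, card_filter_insert _ _ hw]
  simp

lemma key1 (n e : ℕ) :
    (Wj n e)ᵀ * Wj n e = Ajohnson n (e + 1) + ((e : ℝ) + 1) • (1 : Matrix _ _ ℝ) := by
  classical
  ext α β
  rw [Matrix.mul_apply]
  simp only [Matrix.transpose_apply]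
  by_cases hab : α = β
  · subst hab
    have h1 : ∀ γ : {s : Finset (Fin n) // s.card = e},
        Wj n e γ α * Wj n e γ α = if γ.1 ⊆ α.1 then (1 : ℝ) else 0 := by
      intro γ
      unfold Wj
      split_ifs with h
      · rw [← pow_add]; exact Even.neg_one_pow ⟨_, rfl⟩
      · rw [mul_zero]
    rw [Finset.sum_congr rfl (fun γ _ => h1 γ), Finset.sum_boole, card_sub_subsets α.1 e α.2]
    have hdiag : Ajohnson n (e + 1) α α = 0 := by
      unfold Ajohnson
      rw [if_neg]
      simp [symmDiff_self]
    rw [Matrix.add_apply, hdiag, Matrix.smul_apply, Matrix.one_apply_eq, smul_eq_mul, mul_one]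
    push_cast
    ring
  · have hne : α.1 ≠ β.1 := fun h => hab (Subtype.ext h)
    rw [Matrix.add_apply, Matrix.smul_apply, Matrix.one_apply_ne hab, smul_zero, add_zero]
    by_cases h2 : (symmDiff α.1 β.1).card = 2
    · obtain ⟨u, v, huv, hA, hB⟩ := sdiff_card_pair (α.2.trans β.2.symm) h2
      set T := α.1 ∩ β.1 with hT
      have huα : u ∈ α.1 \ β.1 := by rw [hA]; exact Finset.mem_singleton_self u
      have hvβ : v ∈ β.1 \ α.1 := by rw [hB]; exact Finset.mem_singleton_self v
      rw [Finset.mem_sdiff] at huα hvβ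
      have hTu : u ∉ T := fun h => huα.2 (Finset.mem_inter.mp h).2
      have hTv : v ∉ T := fun h => hvβ.2 (Finset.mem_inter.mp h).1
      have hTcard : T.card = e := by
        have h3 := Finset.card_inter_add_card_sdiff α.1 β.1
        rw [hA, Finset.card_singleton, α.2, ← hT] at h3
        omega
      have hTα : α.1 \ T = {u} := by rw [hT, Finset.sdiff_inter_self_left, hA]
      have hTβ : β.1 \ T = {v} := by
        rw [hT, Finset.inter_comm, Finset.sdiff_inter_self_left, hB]
      have hsubα : T ⊆ α.1 := Finset.inter_subset_left
      have hsubβ : T ⊆ β.1 := Finset.inter_subset_right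
      set γ₀ : {s : Finset (Fin n) // s.card = e} := ⟨T, hTcard⟩ with hγ₀
      rw [Finset.sum_eq_single_of_mem γ₀ (Finset.mem_univ _) ?side]
      case side =>
        intro γ _ hγ
        unfold Wj
        split_ifs with g1 g2
        · exfalso
          apply hγ
          apply Subtype.ext
          exact Finset.eq_of_subset_of_card_le (Finset.subset_inter g1 g2)
            (by rw [hTcard, γ.2])
        · rw [mul_zero]
        · rw [zero_mul]
        · rw [zero_mul]
      rw [wj_apply_pair γ₀ α u hsubα hTα hTu, wj_apply_pair γ₀ β v hsubβ hTβ hTv,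
        ← pow_add, neg_one_pow_count u v T hTu hTv]
      unfold Ajohnson
      rw [if_pos h2]
      congr 1
      unfold hjExp
      congr 1
      have hsd : symmDiff α.1 β.1 = {u, v} := by
        rw [symmDiff_def, Finset.sup_eq_union, hA, hB]
        ext a; simp
      rw [hsd]
      apply Finset.filter_congr
      intro l _
      simp
    · unfold Ajohnson
      rw [if_neg h2]
      apply Finset.sum_eq_zero
      intro γ _
      unfold Wj
      split_ifs with g1 g2
      · exfalso
        have hk : #(α.1 \ β.1) = #(β.1 \ α.1) := by
          have h3 := Finset.card_inter_add_card_sdiff α.1 β.1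
          have h4 := Finset.card_inter_add_card_sdiff β.1 α.1
          rw [Finset.inter_comm] at h4
          rw [α.2] at h3; rw [β.2] at h4
          omega
        have hsd : #(symmDiff α.1 β.1) = 2 * #(α.1 \ β.1) := by
          rw [symmDiff_def, Finset.sup_eq_union,
            Finset.card_union_of_disjoint disjoint_sdiff_sdiff]
          omega
        have hk1 : #(α.1 \ β.1) ≠ 0 := by
          intro h0
          rw [Finset.card_eq_zero, Finset.sdiff_eq_empty_iff_subset] at h0
          exact hne (Finset.eq_of_subset_of_card_le h0 (by rw [α.2, β.2]))
        have hk2 : 2 ≤ #(α.1 \ β.1) := by omega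
        have hint := Finset.card_inter_add_card_sdiff α.1 β.1
        rw [α.2] at hint
        have hle : γ.1.card ≤ #(α.1 ∩ β.1) :=
          Finset.card_le_card (Finset.subset_inter g1 g2)
        rw [γ.2] at hle
        omega
      · rw [mul_zero]
      · rw [zero_mul]
      · rw [zero_mul]
end Keys

section Keys2
variable {n : ℕ}

lemma ajohnson_entry {e : ℕ} (α β : {s : Finset (Fin n) // s.card = e + 1})
    (h2 : #(symmDiff α.1 β.1) = 2) {u v : Fin n}
    (hA : α.1 \ β.1 = {u}) (hB : β.1 \ α.1 = {v}) :
    Ajohnson n (e + 1) α β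
      = (-1 : ℝ) ^ #((α.1 ∩ β.1).filter (fun l => (u < l ∨ v < l) ∧ (l < u ∨ l < v))) := by
  unfold Ajohnson
  rw [if_pos h2]
  congr 1
  unfold hjExp
  congr 1
  have hsd : symmDiff α.1 β.1 = {u, v} := by
    rw [symmDiff_def, Finset.sup_eq_union, hA, hB]; ext a; simp
  rw [hsd]
  apply Finset.filter_congr
  intro l _
  simp

lemma insert_sdiff_self' {w : Fin n} {s : Finset (Fin n)} (hw : w ∉ s) :
    insert w s \ s = {w} := by
  ext a
  simp only [Finset.mem_sdiff, Finset.mem_insert, Finset.mem_singleton]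
  constructor
  · rintro ⟨h | h, h2⟩
    · exact h
    · exact absurd h h2
  · rintro rfl
    exact ⟨Or.inl rfl, hw⟩

lemma key2 (n e : ℕ) :
    Wj n (e + 1) * (Wj n (e + 1))ᵀ
      = ((n : ℝ) - (e + 1)) • (1 : Matrix _ _ ℝ) - Ajohnson n (e + 1) := by
  classical
  ext α β
  rw [Matrix.mul_apply]
  simp only [Matrix.transpose_apply]
  have hen : e + 1 ≤ n := by
    have := Finset.card_le_univ α.1
    rwa [α.2, Fintype.card_fin] at this
  by_cases hab : α = β
  · subst hab
    have h1 : ∀ δ : {s : Finset (Fin n) // s.card = e + 1 + 1},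
        Wj n (e + 1) α δ * Wj n (e + 1) α δ = if α.1 ⊆ δ.1 then (1 : ℝ) else 0 := by
      intro δ
      unfold Wj
      split_ifs with h
      · rw [← pow_add]; exact Even.neg_one_pow ⟨_, rfl⟩
      · rw [mul_zero]
    rw [Finset.sum_congr rfl (fun δ _ => h1 δ), Finset.sum_boole, card_sup_subsets α.1 e α.2]
    have hdiag : Ajohnson n (e + 1) α α = 0 := by
      unfold Ajohnson
      rw [if_neg]
      simp [symmDiff_self]
    rw [Matrix.sub_apply, hdiag, Matrix.smul_apply, Matrix.one_apply_eq, smul_eq_mul, mul_one,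
      sub_zero, Nat.cast_sub hen]
    push_cast
    ring
  · have hne : α.1 ≠ β.1 := fun h => hab (Subtype.ext h)
    rw [Matrix.sub_apply, Matrix.smul_apply, Matrix.one_apply_ne hab, smul_zero, zero_sub]
    by_cases h2 : (symmDiff α.1 β.1).card = 2
    · obtain ⟨u, v, huv, hA, hB⟩ := sdiff_card_pair (α.2.trans β.2.symm) h2
      set T := α.1 ∩ β.1 with hT
      have huα : u ∈ α.1 \ β.1 := by rw [hA]; exact Finset.mem_singleton_self u
      have hvβ : v ∈ β.1 \ α.1 := by rw [hB]; exact Finset.mem_singleton_self v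
      rw [Finset.mem_sdiff] at huα hvβ
      have hTu : u ∉ T := fun h => huα.2 (Finset.mem_inter.mp h).2
      have hTv : v ∉ T := fun h => hvβ.2 (Finset.mem_inter.mp h).1
      have hαins : α.1 = insert u T := eq_insert_of_sdiff hA
      have hβins : β.1 = insert v T := by
        have := eq_insert_of_sdiff hB
        rwa [Finset.inter_comm] at this
      have hδcard : #(α.1 ∪ β.1) = e + 1 + 1 := by
        have h3 : α.1 ∪ β.1 = insert v α.1 := by
          rw [← Finset.union_sdiff_self_eq_union, hB, Finset.union_comm, ← Finset.insert_eq]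
        rw [h3, Finset.card_insert_of_notMem hvβ.2, α.2]
      set δ₀ : {s : Finset (Fin n) // s.card = e + 1 + 1} := ⟨α.1 ∪ β.1, hδcard⟩ with hδ₀
      rw [Finset.sum_eq_single_of_mem δ₀ (Finset.mem_univ _) ?side]
      case side =>
        intro δ _ hδ
        unfold Wj
        split_ifs with g1 g2
        · exfalso
          apply hδ
          apply Subtype.ext
          symm
          exact Finset.eq_of_subset_of_card_le (Finset.union_subset g1 g2)
            (by rw [hδcard, δ.2])
        · rw [mul_zero]
        · rw [zero_mul]
        · rw [zero_mul]
      have hd1 : δ₀.1 \ α.1 = {v} := by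
        show (α.1 ∪ β.1) \ α.1 = {v}
        rw [Finset.union_sdiff_left, hB]
      have hd2 : δ₀.1 \ β.1 = {u} := by
        show (α.1 ∪ β.1) \ β.1 = {u}
        rw [Finset.union_sdiff_right, hA]
      rw [wj_apply_pair α δ₀ v Finset.subset_union_left hd1 hvβ.2,
        wj_apply_pair β δ₀ u Finset.subset_union_right hd2 huα.2,
        ajohnson_entry α β h2 hA hB, ← hT, ← pow_add]
      have hcα : #(α.1.filter (fun y => y < v)) = #(T.filter (fun y => y < v))
          + if u < v then 1 else 0 := by
        rw [hαins, card_filter_insert T u hTu]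
      have hcβ : #(β.1.filter (fun y => y < u)) = #(T.filter (fun y => y < u))
          + if v < u then 1 else 0 := by
        rw [hβins, card_filter_insert T v hTv]
      rw [hcα, hcβ]
      rcases lt_or_gt_of_ne huv with hlt | hlt
      · rw [if_pos hlt, if_neg (asymm hlt)]
        have harith : #(T.filter (fun y => y < v)) + 1 + (#(T.filter (fun y => y < u)) + 0)
            = (#(T.filter (fun l => l < u)) + #(T.filter (fun l => l < v))) + 1 := by omega
        rw [harith, pow_succ, neg_one_pow_count u v T hTu hTv]
        ring
      · rw [if_neg (asymm hlt), if_pos hlt]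
        have harith : #(T.filter (fun y => y < v)) + 0 + (#(T.filter (fun y => y < u)) + 1)
            = (#(T.filter (fun l => l < u)) + #(T.filter (fun l => l < v))) + 1 := by omega
        rw [harith, pow_succ, neg_one_pow_count u v T hTu hTv]
        ring
    · unfold Ajohnson
      rw [if_neg h2, neg_zero]
      apply Finset.sum_eq_zero
      intro δ _
      unfold Wj
      split_ifs with g1 g2
      · exfalso
        have hk : #(α.1 \ β.1) = #(β.1 \ α.1) := by
          have h3 := Finset.card_inter_add_card_sdiff α.1 β.1
          have h4 := Finset.card_inter_add_card_sdiff β.1 α.1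
          rw [Finset.inter_comm] at h4
          rw [α.2] at h3; rw [β.2] at h4
          omega
        have hsd : #(symmDiff α.1 β.1) = 2 * #(α.1 \ β.1) := by
          rw [symmDiff_def, Finset.sup_eq_union,
            Finset.card_union_of_disjoint disjoint_sdiff_sdiff]
          omega
        have hk1 : #(α.1 \ β.1) ≠ 0 := by
          intro h0
          rw [Finset.card_eq_zero, Finset.sdiff_eq_empty_iff_subset] at h0
          exact hne (Finset.eq_of_subset_of_card_le h0 (by rw [α.2, β.2]))
        have hk2 : 2 ≤ #(α.1 \ β.1) := by omega
        have hcup : #(α.1 ∪ β.1) ≤ e + 1 + 1 := by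
          rw [← δ.2]
          exact Finset.card_le_card (Finset.union_subset g1 g2)
        have h3 := Finset.card_inter_add_card_sdiff α.1 β.1
        have hiu := Finset.card_inter_add_card_union α.1 β.1
        rw [α.2] at h3
        rw [α.2, β.2] at hiu
        omega
      · rw [mul_zero]
      · rw [zero_mul]
      · rw [zero_mul]

lemma key3 (n e : ℕ) : Wj n e * Wj n (e + 1) = 0 := by
  classical
  ext γ δ
  rw [Matrix.mul_apply, Matrix.zero_apply]
  by_cases hsub : γ.1 ⊆ δ.1
  · have hc2 : #(δ.1 \ γ.1) = 2 := by
      rw [Finset.card_sdiff_of_subset hsub, δ.2, γ.2]; omega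
    obtain ⟨u, v, huv, hpair⟩ := Finset.card_eq_two.mp hc2
    have hu : u ∈ δ.1 ∧ u ∉ γ.1 := by
      have : u ∈ δ.1 \ γ.1 := by rw [hpair]; exact Finset.mem_insert_self u {v}
      exact Finset.mem_sdiff.mp this
    have hv : v ∈ δ.1 ∧ v ∉ γ.1 := by
      have : v ∈ δ.1 \ γ.1 := by
        rw [hpair]; exact Finset.mem_insert_of_mem (Finset.mem_singleton_self v)
      exact Finset.mem_sdiff.mp this
    set A1 : {s : Finset (Fin n) // s.card = e + 1} :=
      ⟨insert u γ.1, by rw [Finset.card_insert_of_notMem hu.2, γ.2]⟩ with hA1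
    set A2 : {s : Finset (Fin n) // s.card = e + 1} :=
      ⟨insert v γ.1, by rw [Finset.card_insert_of_notMem hv.2, γ.2]⟩ with hA2
    have hA12 : A1 ≠ A2 := by
      intro h
      have : u ∈ insert v γ.1 := by
        rw [hA2] at h
        have := congrArg (fun x => (x : {s : Finset (Fin n) // s.card = e + 1}).1) h
        simp only at this
        rw [← this]
        exact Finset.mem_insert_self u γ.1
      rcases Finset.mem_insert.mp this with h' | h'
      · exact huv h'
      · exact hu.2 h'
    have hz : ∀ x ∈ (univ : Finset {s : Finset (Fin n) // s.card = e + 1}),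
        x ∉ ({A1, A2} : Finset _) → Wj n e γ x * Wj n (e + 1) x δ = 0 := by
      intro x _ hx
      unfold Wj
      split_ifs with g1 g2
      · exfalso
        apply hx
        have hxc : #(x.1 \ γ.1) = 1 := by
          rw [Finset.card_sdiff_of_subset g1, x.2, γ.2]; omega
        obtain ⟨w, hw⟩ := Finset.card_eq_one.mp hxc
        have hwmem : w ∈ ({u, v} : Finset (Fin n)) := by
          rw [← hpair]
          apply Finset.sdiff_subset_sdiff g2 (le_refl _)
          rw [hw]
          exact Finset.mem_singleton_self w
        have hxeq : x.1 = insert w γ.1 := by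
          rw [← Finset.union_sdiff_of_subset g1, hw, Finset.union_comm, ← Finset.insert_eq]
        rcases Finset.mem_insert.mp hwmem with rfl | h'
        · exact Finset.mem_insert.mpr (Or.inl (Subtype.ext hxeq))
        · rw [Finset.mem_singleton] at h'
          subst h'
          exact Finset.mem_insert.mpr (Or.inr (Finset.mem_singleton.mpr (Subtype.ext hxeq)))
      · rw [mul_zero]
      · rw [zero_mul]
      · rw [zero_mul]
    rw [← Finset.sum_subset (Finset.subset_univ ({A1, A2} : Finset _)) hz,
      Finset.sum_pair hA12]
    have hδγ : ∀ a, a ∈ δ.1 ∧ a ∉ γ.1 ↔ (a = u ∨ a = v) := by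
      intro a
      rw [← Finset.mem_sdiff, hpair]
      simp
    have hdA1 : δ.1 \ A1.1 = {v} := by
      ext a
      simp only [hA1, Finset.mem_sdiff, Finset.mem_insert, Finset.mem_singleton]
      constructor
      · rintro ⟨h1, h2⟩
        rcases (hδγ a).mp ⟨h1, fun hg => h2 (Or.inr hg)⟩ with rfl | rfl
        · exact absurd (Or.inl rfl) h2
        · rfl
      · rintro rfl
        refine ⟨hv.1, ?_⟩
        rintro (rfl | hg)
        · exact huv rfl
        · exact hv.2 hg
    have hdA2 : δ.1 \ A2.1 = {u} := by
      ext a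
      simp only [hA2, Finset.mem_sdiff, Finset.mem_insert, Finset.mem_singleton]
      constructor
      · rintro ⟨h1, h2⟩
        rcases (hδγ a).mp ⟨h1, fun hg => h2 (Or.inr hg)⟩ with rfl | rfl
        · rfl
        · exact absurd (Or.inl rfl) h2
      · rintro rfl
        refine ⟨hu.1, ?_⟩
        rintro (rfl | hg)
        · exact huv rfl
        · exact hu.2 hg
    have hvA1 : v ∉ A1.1 := by
      rw [hA1]
      intro h
      rcases Finset.mem_insert.mp h with h' | h'
      · exact huv h'.symm
      · exact hv.2 h'
    have huA2 : u ∉ A2.1 := by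
      rw [hA2]
      intro h
      rcases Finset.mem_insert.mp h with h' | h'
      · exact huv h'
      · exact hu.2 h'
    rw [wj_apply_pair γ A1 u (Finset.subset_insert u γ.1) (insert_sdiff_self' hu.2) hu.2,
      wj_apply_pair γ A2 v (Finset.subset_insert v γ.1) (insert_sdiff_self' hv.2) hv.2,
      wj_apply_pair A1 δ v (Finset.insert_subset hu.1 hsub) hdA1 hvA1,
      wj_apply_pair A2 δ u (Finset.insert_subset hv.1 hsub) hdA2 huA2]
    have hc1 : #(A1.1.filter (fun y => y < v)) = #(γ.1.filter (fun y => y < v))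
        + if u < v then 1 else 0 := by
      rw [hA1]; exact card_filter_insert γ.1 u hu.2 _
    have hc2' : #(A2.1.filter (fun y => y < u)) = #(γ.1.filter (fun y => y < u))
        + if v < u then 1 else 0 := by
      rw [hA2]; exact card_filter_insert γ.1 v hv.2 _
    rw [hc1, hc2', ← pow_add, ← pow_add]
    rcases lt_or_gt_of_ne huv with hlt | hlt
    · rw [if_pos hlt, if_neg (asymm hlt)]
      have harith1 : #(γ.1.filter (fun y => y < u)) + (#(γ.1.filter (fun y => y < v)) + 1)
          = (#(γ.1.filter (fun y => y < v)) + (#(γ.1.filter (fun y => y < u)) + 0)) + 1 := by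
        omega
      rw [harith1, pow_succ]
      ring
    · rw [if_neg (asymm hlt), if_pos hlt]
      have harith1 : #(γ.1.filter (fun y => y < v)) + (#(γ.1.filter (fun y => y < u)) + 1)
          = (#(γ.1.filter (fun y => y < u)) + (#(γ.1.filter (fun y => y < v)) + 0)) + 1 := by
        omega
      rw [harith1, pow_succ]
      ring
  · apply Finset.sum_eq_zero
    intro x _
    unfold Wj
    split_ifs with g1 g2
    · exact absurd (g1.trans g2) hsub
    · rw [mul_zero]
    · rw [zero_mul]
    · rw [zero_mul]
end Keys2

section Lin

variable {V : Type*} [Fintype V] [DecidableEq V]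

lemma charpoly_conj' (P Q B : Matrix V V ℝ) (hPQ : P * Q = 1) :
    (P * B * Q).charpoly = B.charpoly := by
  have hQP : Q * P = 1 := mul_eq_one_comm.mp hPQ
  have hmapPQ : P.map (C : ℝ → ℝ[X]) * Q.map (C : ℝ → ℝ[X]) = 1 := by
    rw [show (C : ℝ → ℝ[X]) = ⇑(C : ℝ →+* ℝ[X]) from rfl, ← Matrix.map_mul, hPQ]
    simp
  have hcm : charmatrix (P * B * Q) = P.map (C : ℝ → ℝ[X]) * charmatrix B
      * Q.map (C : ℝ → ℝ[X]) := by
    unfold charmatrix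
    rw [mul_sub, sub_mul]
    congr 1
    · have hsc : P.map (C : ℝ → ℝ[X]) * Matrix.scalar V (X : ℝ[X]) * Q.map (C : ℝ → ℝ[X])
          = Matrix.scalar V (X : ℝ[X]) := by
        rw [(Matrix.scalar_commute (X : ℝ[X]) (fun r' => Commute.all _ _)
          (P.map (C : ℝ → ℝ[X]))).symm.eq, Matrix.mul_assoc, hmapPQ, Matrix.mul_one]
      exact hsc.symm
    · simp only [RingHom.mapMatrix_apply]
      rw [show (P * B * Q).map ⇑(C : ℝ →+* ℝ[X])
          = P.map (C : ℝ → ℝ[X]) * B.map ⇑(C : ℝ →+* ℝ[X]) * Q.map (C : ℝ → ℝ[X]) by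
        rw [← Matrix.map_mul, ← Matrix.map_mul]]
  unfold Matrix.charpoly
  rw [hcm, Matrix.det_mul, Matrix.det_mul]
  have hdet : (P.map (C : ℝ → ℝ[X])).det * (Q.map (C : ℝ → ℝ[X])).det = 1 := by
    rw [← Matrix.det_mul, hmapPQ, Matrix.det_one]
  calc (P.map (C : ℝ → ℝ[X])).det * (charmatrix B).det * (Q.map (C : ℝ → ℝ[X])).det
      = ((P.map (C : ℝ → ℝ[X])).det * (Q.map (C : ℝ → ℝ[X])).det) * (charmatrix B).det := by
        ring
    _ = (charmatrix B).det := by rw [hdet, one_mul]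

lemma charpoly_diag' (w : V → ℝ) :
    (Matrix.diagonal w).charpoly = ∏ i, (X - C (w i)) := by
  have h : charmatrix (Matrix.diagonal w) = Matrix.diagonal (fun i => X - C (w i)) := by
    ext i j
    by_cases hij : i = j
    · subst hij
      rw [charmatrix_apply_eq, Matrix.diagonal_apply_eq, Matrix.diagonal_apply_eq]
    · rw [charmatrix_apply_ne _ _ _ hij, Matrix.diagonal_apply_ne _ hij,
        Matrix.diagonal_apply_ne _ hij, map_zero, neg_zero]
  rw [Matrix.charpoly, h, Matrix.det_diagonal]

lemma herm_charpoly {B : Matrix V V ℝ} (hB : B.IsHermitian) :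
    B.charpoly = ∏ i, (X - C (hB.eigenvalues i)) := by
  have hU : (hB.eigenvectorUnitary : Matrix V V ℝ)
      * star (hB.eigenvectorUnitary : Matrix V V ℝ) = 1 :=
    Matrix.mem_unitaryGroup_iff.mp hB.eigenvectorUnitary.2
  conv_lhs => rw [hB.spectral_theorem, Unitary.conjStarAlgAut_apply]
  rw [charpoly_conj' _ _ _ hU]
  rw [show (RCLike.ofReal ∘ hB.eigenvalues : V → ℝ) = hB.eigenvalues by
    rw [RCLike.ofReal_real_eq_id, Function.id_comp]]
  exact charpoly_diag' _

lemma eval_charpoly' (B : Matrix V V ℝ) (μ : ℝ) :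
    B.charpoly.eval μ = (μ • (1 : Matrix V V ℝ) - B).det := by
  rw [Matrix.charpoly, ← Polynomial.coe_evalRingHom, RingHom.map_det]
  congr 1
  ext i j
  rw [RingHom.mapMatrix_apply, Matrix.map_apply, charmatrix_apply]
  by_cases hij : i = j
  · subst hij
    simp [Matrix.one_apply_eq]
  · simp [Matrix.diagonal_apply_ne _ hij, Matrix.one_apply_ne hij]

lemma herm_spectrum {B : Matrix V V ℝ} (hB : B.IsHermitian) :
    spectrum ℝ B = Set.range hB.eigenvalues := by
  ext μ
  rw [spectrum.mem_iff, Algebra.algebraMap_eq_smul_one, Matrix.isUnit_iff_isUnit_det,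
    isUnit_iff_ne_zero, not_not, ← eval_charpoly', herm_charpoly hB]
  simp only [eval_prod, eval_sub, eval_X, eval_C, Finset.prod_eq_zero_iff, Finset.mem_univ,
    true_and, sub_eq_zero, Set.mem_range]
  constructor
  · rintro ⟨i, hi⟩; exact ⟨i, hi.symm⟩
  · rintro ⟨i, hi⟩; exact ⟨i, hi.symm⟩

lemma herm_eig_quad {B : Matrix V V ℝ} (hB : B.IsHermitian) {c1 c2 : ℝ}
    (hq : B * B = c1 • B + c2 • 1) (i : V) :
    hB.eigenvalues i ^ 2 = c1 * hB.eigenvalues i + c2 := by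
  have hv := hB.mulVec_eigenvectorBasis i
  have hne : ⇑(hB.eigenvectorBasis i) ≠ 0 := by
    have := hB.eigenvectorBasis.orthonormal.ne_zero i
    intro h
    apply this
    ext x
    exact congrFun h x
  have h1 : (B * B) *ᵥ ⇑(hB.eigenvectorBasis i)
      = (hB.eigenvalues i ^ 2) • ⇑(hB.eigenvectorBasis i) := by
    rw [← Matrix.mulVec_mulVec, hv, Matrix.mulVec_smul, hv, smul_smul, ← sq]
  rw [hq, Matrix.add_mulVec, Matrix.smul_mulVec, Matrix.smul_mulVec,
    Matrix.one_mulVec, hv, smul_smul] at h1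
  have h2 : (hB.eigenvalues i ^ 2 - (c1 * hB.eigenvalues i + c2))
      • ⇑(hB.eigenvectorBasis i) = 0 := by
    rw [sub_smul, ← h1, add_smul]
    abel
  rcases smul_eq_zero.mp h2 with h | h
  · linarith [sub_eq_zero.mp (by linarith [h] : hB.eigenvalues i ^ 2
      - (c1 * hB.eigenvalues i + c2) = 0)]
  · exact absurd h hne

lemma herm_const_of_singleton {B : Matrix V V ℝ} (hB : B.IsHermitian) {c0 : ℝ}
    (h : ∀ i, hB.eigenvalues i = c0) : B = c0 • 1 := by
  have hU : (hB.eigenvectorUnitary : Matrix V V ℝ)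
      * star (hB.eigenvectorUnitary : Matrix V V ℝ) = 1 :=
    Matrix.mem_unitaryGroup_iff.mp hB.eigenvectorUnitary.2
  have hD : Matrix.diagonal (RCLike.ofReal ∘ hB.eigenvalues : V → ℝ) = c0 • 1 := by
    rw [RCLike.ofReal_real_eq_id, Function.id_comp, Matrix.smul_one_eq_diagonal]
    exact congrArg Matrix.diagonal (funext h)
  conv_lhs => rw [hB.spectral_theorem, Unitary.conjStarAlgAut_apply]
  rw [hD, Matrix.mul_smul, Matrix.mul_one, Matrix.smul_mul, hU]
end Lin



lemma ajohnson_symm (n d : ℕ) : (Ajohnson n d).IsHermitian := by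
  rw [Matrix.IsHermitian, Matrix.conjTranspose_eq_transpose_of_trivial]
  ext α β
  rw [Matrix.transpose_apply]
  unfold Ajohnson hjExp
  rw [symmDiff_comm (β.1) (α.1), Finset.inter_comm (β.1) (α.1)]

lemma ajohnson_quad (n e : ℕ) :
    Ajohnson n (e + 1) * Ajohnson n (e + 1)
      = ((n : ℝ) - 2 * ((e : ℝ) + 1)) • Ajohnson n (e + 1)
        + (((e : ℝ) + 1) * ((n : ℝ) - ((e : ℝ) + 1))) • (1 : Matrix _ _ ℝ) := by
  set c : ℝ := (e : ℝ) + 1 with hc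
  set M := (Wj n e)ᵀ * Wj n e with hM
  set N := Wj n (e + 1) * (Wj n (e + 1))ᵀ with hN
  have hMN : M * N = 0 := by
    rw [hM, hN, Matrix.mul_assoc, ← Matrix.mul_assoc (Wj n e) (Wj n (e + 1)) ((Wj n (e + 1))ᵀ),
      key3, Matrix.zero_mul, Matrix.mul_zero]
  have hMa : M = Ajohnson n (e + 1) + c • 1 := key1 n e
  have hNa : N = ((n : ℝ) - c) • 1 - Ajohnson n (e + 1) := key2 n e
  have hMsum : N = (n : ℝ) • (1 : Matrix _ _ ℝ) - M := by
    rw [hMa, hNa]; module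
  have h1 : M = (n : ℝ) • (1 : Matrix _ _ ℝ) - N := by
    rw [hMsum]; module
  have hM2 : M * M = (n : ℝ) • M := by
    calc M * M = M * ((n : ℝ) • (1 : Matrix _ _ ℝ) - N) := by rw [← h1]
      _ = (n : ℝ) • (M * 1) - M * N := by rw [Matrix.mul_sub, Matrix.mul_smul]
      _ = (n : ℝ) • M := by rw [hMN, Matrix.mul_one, sub_zero]
  have hAeq : Ajohnson n (e + 1) = M - c • 1 := by
    rw [hMa]; module
  rw [hAeq]
  have expand : (M - c • 1) * (M - c • 1)
      = M * M - (2 * c) • M + (c * c) • (1 : Matrix _ _ ℝ) := by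
    simp only [Matrix.sub_mul, Matrix.mul_sub, Matrix.smul_mul, Matrix.mul_smul,
      Matrix.mul_one, Matrix.one_mul, smul_smul]
    module
  rw [expand, hM2]
  module


/-- For `d ≥ 1`, `n ≥ d + 1`, the signed adjacency matrix `A = A_{n,d}`
of the Johnson graph satisfies `A² = (n − 2d)A + d(n − d)I`, `rank(A + dI) = C(n−1,d−1)`;
its eigenvalues are `−d` with multiplicity `C(n−1,d)` and `n − d` with multiplicity
`C(n−1,d−1)` (stated via the characteristic polynomial); `A ∈ S(J(n,d))` has entries in
`{0, 1, −1}`, and `q(J(n,d)) = 2`. -/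
theorem stmt_5 (n d : ℕ) (hd : 1 ≤ d) (hn : d + 1 ≤ n) :
    Ajohnson n d * Ajohnson n d =
        ((n : ℝ) - 2 * d) • Ajohnson n d + ((d : ℝ) * ((n : ℝ) - d)) • (1 : Matrix _ _ ℝ) ∧
    (Ajohnson n d + (d : ℝ) • (1 : Matrix _ _ ℝ)).rank = (n - 1).choose (d - 1) ∧
    (Ajohnson n d).charpoly =
        (X + C (d : ℝ)) ^ ((n - 1).choose d) * (X - C ((n : ℝ) - d)) ^ ((n - 1).choose (d - 1)) ∧
    Ajohnson n d ∈ Sset (Johnson n d) ∧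
    (∀ α β, Ajohnson n d α β = 0 ∨ Ajohnson n d α β = 1 ∨ Ajohnson n d α β = -1) ∧
    minQ (Johnson n d) = 2 := by
  classical
  obtain ⟨e, rfl⟩ : ∃ e, d = e + 1 := ⟨d - 1, by omega⟩
  have hnpos : 0 < n := by omega
  have hne2 : e + 2 ≤ n := by omega
  have hcast : ((e + 1 : ℕ) : ℝ) = (e : ℝ) + 1 := by push_cast; ring
  have hnR : (n : ℝ) ≠ 0 := by
    exact_mod_cast hnpos.ne'
  have hA : (Ajohnson n (e + 1)).IsHermitian := ajohnson_symm n (e + 1)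
  have hquad := ajohnson_quad n e
  set lam := hA.eigenvalues with hlam
  have hdich : ∀ i, lam i = -((e : ℝ) + 1) ∨ lam i = (n : ℝ) - ((e : ℝ) + 1) := by
    intro i
    have h := herm_eig_quad hA hquad i
    have hfac : (lam i + ((e : ℝ) + 1))
        * (lam i - ((n : ℝ) - ((e : ℝ) + 1))) = 0 := by
      nlinarith [h]
    rcases mul_eq_zero.mp hfac with h1 | h1
    · left; linarith [h1]
    · right; linarith [h1]
  -- trace of A is zero
  have htr0 : (Ajohnson n (e + 1)).trace = 0 := by
    rw [Matrix.trace]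
    apply Finset.sum_eq_zero
    intro α _
    rw [Matrix.diag_apply]
    unfold Ajohnson
    rw [if_neg]
    simp [symmDiff_self]
  have hU := Matrix.mem_unitaryGroup_iff.mp hA.eigenvectorUnitary.2
  have hUs := Matrix.mem_unitaryGroup_iff'.mp hA.eigenvectorUnitary.2
  have hdet1 := congrArg Matrix.det hU
  rw [Matrix.det_mul, Matrix.det_one] at hdet1
  have hdet2 : (star (hA.eigenvectorUnitary : Matrix {s : Finset (Fin n) // s.card = e + 1}
        {s : Finset (Fin n) // s.card = e + 1} ℝ)).det
      * (hA.eigenvectorUnitary : Matrix {s : Finset (Fin n) // s.card = e + 1}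
        {s : Finset (Fin n) // s.card = e + 1} ℝ).det = 1 := by
    rw [mul_comm]; exact hdet1
  have hdU := IsUnit.of_mul_eq_one _ hdet1
  have hdUs := IsUnit.of_mul_eq_one _ hdet2
  have htr : (Ajohnson n (e + 1)).trace = ∑ i, lam i := by
    conv_lhs => rw [hA.spectral_theorem, Unitary.conjStarAlgAut_apply]
    rw [Matrix.trace_mul_cycle, hUs, Matrix.one_mul, Matrix.trace_diagonal]
    rw [RCLike.ofReal_real_eq_id]
    simp [hlam]
  set S := Finset.univ.filter (fun i => lam i = (n : ℝ) - ((e : ℝ) + 1)) with hS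
  set Sc := Finset.univ.filter (fun i => ¬ lam i = (n : ℝ) - ((e : ℝ) + 1)) with hSc
  have hScval : ∀ i ∈ Sc, lam i = -((e : ℝ) + 1) := by
    intro i hi
    rcases hdich i with h | h
    · exact h
    · rw [hSc] at hi
      exact absurd h (Finset.mem_filter.mp hi).2
  have hsum : ∑ i ∈ S, lam i + ∑ i ∈ Sc, lam i = 0 := by
    rw [hS, hSc, Finset.sum_filter_add_sum_filter_not, ← htr, htr0]
  have hSsum : ∑ i ∈ S, lam i = (#S : ℝ) * ((n : ℝ) - ((e : ℝ) + 1)) := by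
    rw [show ∑ i ∈ S, lam i = ∑ _i ∈ S, ((n : ℝ) - ((e : ℝ) + 1)) from
      Finset.sum_congr rfl (fun i hi => by rw [hS] at hi; exact (Finset.mem_filter.mp hi).2)]
    rw [Finset.sum_const, nsmul_eq_mul]
  have hScsum : ∑ i ∈ Sc, lam i = (#Sc : ℝ) * (-((e : ℝ) + 1)) := by
    rw [show ∑ i ∈ Sc, lam i = ∑ _i ∈ Sc, (-((e : ℝ) + 1)) from
      Finset.sum_congr rfl hScval]
    rw [Finset.sum_const, nsmul_eq_mul]
  have hcardV : Fintype.card {s : Finset (Fin n) // s.card = e + 1} = n.choose (e + 1) := by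
    rw [Fintype.card_finset_len, Fintype.card_fin]
  have hcards : #S + #Sc = n.choose (e + 1) := by
    rw [hS, hSc, Finset.card_filter_add_card_filter_not, Finset.card_univ, hcardV]
  have hnat : n * ((n - 1).choose e) = (e + 1) * n.choose (e + 1) := by
    have h1 := Nat.add_one_mul_choose_eq (n - 1) e
    rw [show n - 1 + 1 = n by omega] at h1
    rw [h1, Nat.mul_comm]
  have hc1 : (#S : ℝ) * n = ((e : ℝ) + 1) * ((n.choose (e + 1) : ℕ) : ℝ) := by
    have h0 : (#S : ℝ) * ((n : ℝ) - ((e : ℝ) + 1)) + (#Sc : ℝ) * (-((e : ℝ) + 1)) = 0 := by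
      rw [← hSsum, ← hScsum]; exact hsum
    have h2 : (#S : ℝ) + (#Sc : ℝ) = ((n.choose (e + 1) : ℕ) : ℝ) := by
      exact_mod_cast hcards
    linear_combination h0 + ((e : ℝ) + 1) * h2
  have hSreal : (#S : ℝ) = (((n - 1).choose e : ℕ) : ℝ) := by
    apply mul_right_cancel₀ hnR
    rw [hc1]
    have : (((e + 1) * n.choose (e + 1) : ℕ) : ℝ) = ((n * ((n - 1).choose e) : ℕ) : ℝ) := by
      rw [hnat]
    push_cast at this
    linarith [this]
  have hScard : #S = (n - 1).choose e := by exact_mod_cast hSreal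
  have hpascal : n.choose (e + 1) = (n - 1).choose e + (n - 1).choose (e + 1) := by
    have h1 := Nat.choose_succ_succ (n - 1) e
    rwa [show (n - 1).succ = n by omega] at h1
  have hSccard : #Sc = (n - 1).choose (e + 1) := by omega
  -- charpoly
  have hcp : (Ajohnson n (e + 1)).charpoly
      = (X + C ((e : ℝ) + 1)) ^ ((n - 1).choose (e + 1))
        * (X - C ((n : ℝ) - ((e : ℝ) + 1))) ^ ((n - 1).choose e) := by
    rw [herm_charpoly hA, ← hlam,
      ← Finset.prod_filter_mul_prod_filter_not univ
        (fun i => lam i = (n : ℝ) - ((e : ℝ) + 1)) (fun i => X - C (lam i)),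
      ← hS, ← hSc]
    have hprod1 : ∏ i ∈ S, (X - C (lam i)) = (X - C ((n : ℝ) - ((e : ℝ) + 1))) ^ #S := by
      rw [show ∏ i ∈ S, (X - C (lam i)) = ∏ _i ∈ S, (X - C ((n : ℝ) - ((e : ℝ) + 1))) from
        Finset.prod_congr rfl (fun i hi => by
          rw [hS] at hi; rw [(Finset.mem_filter.mp hi).2])]
      rw [Finset.prod_const]
    have hprod2 : ∏ i ∈ Sc, (X - C (lam i)) = (X + C ((e : ℝ) + 1)) ^ #Sc := by
      rw [show ∏ i ∈ Sc, (X - C (lam i)) = ∏ _i ∈ Sc, (X + C ((e : ℝ) + 1)) from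
        Finset.prod_congr rfl (fun i hi => by rw [hScval i hi, map_neg, sub_neg_eq_add])]
      rw [Finset.prod_const]
    rw [hprod1, hprod2, hScard, hSccard, mul_comm]
  -- rank
  have hrank : (Ajohnson n (e + 1) + ((e : ℝ) + 1) • 1).rank = (n - 1).choose e := by
    have hDdec : Matrix.diagonal (fun i => lam i + ((e : ℝ) + 1))
        = Matrix.diagonal ((RCLike.ofReal : ℝ → ℝ) ∘ hA.eigenvalues)
          + ((e : ℝ) + 1) • (1 : Matrix _ _ ℝ) := by
      rw [Matrix.smul_one_eq_diagonal, Matrix.diagonal_add, RCLike.ofReal_real_eq_id,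
        Function.id_comp, ← hlam]
    have hconj : Ajohnson n (e + 1) + ((e : ℝ) + 1) • 1
        = (hA.eigenvectorUnitary : Matrix _ _ ℝ)
          * Matrix.diagonal (fun i => lam i + ((e : ℝ) + 1))
          * star (hA.eigenvectorUnitary : Matrix _ _ ℝ) := by
      conv_lhs => rw [hA.spectral_theorem, Unitary.conjStarAlgAut_apply]
      rw [hDdec, Matrix.mul_add, Matrix.add_mul, Matrix.mul_smul, Matrix.mul_one,
        Matrix.smul_mul, hU]
    rw [hconj, Matrix.rank_mul_eq_left_of_isUnit_det _ _ hdUs,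
      Matrix.rank_mul_eq_right_of_isUnit_det _ _ hdU, Matrix.rank_diagonal,
      Fintype.card_subtype]
    have hfilt : (univ.filter (fun i => lam i + ((e : ℝ) + 1) ≠ 0)) = S := by
      rw [hS]
      apply Finset.filter_congr
      intro i _
      constructor
      · intro hne0
        rcases hdich i with h | h
        · exact absurd (by rw [h]; ring) hne0
        · exact h
      · intro heq
        rw [heq]
        intro h0
        apply hnR
        linarith [h0]
    rw [hfilt, hScard]
  -- Sset membership
  have hSset : Ajohnson n (e + 1) ∈ Sset (Johnson n (e + 1)) := by
    constructor
    · show (Ajohnson n (e + 1))ᵀ = Ajohnson n (e + 1)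
      rw [← Matrix.conjTranspose_eq_transpose_of_trivial]
      exact hA
    · intro u v huv
      constructor
      · intro hne0
        by_contra hadj
        have hadj' : ¬ ((symmDiff u.1 v.1).card = 2) := hadj
        apply hne0
        unfold Ajohnson
        rw [if_neg hadj']
      · intro hadj
        have hadj' : (symmDiff u.1 v.1).card = 2 := hadj
        unfold Ajohnson
        rw [if_pos hadj']
        apply pow_ne_zero
        norm_num
  -- entries
  have hentries : ∀ α β, Ajohnson n (e + 1) α β = 0 ∨ Ajohnson n (e + 1) α β = 1
      ∨ Ajohnson n (e + 1) α β = -1 := by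
    intro α β
    unfold Ajohnson
    by_cases h : (symmDiff α.1 β.1).card = 2
    · rcases Nat.even_or_odd (hjExp α.1 β.1) with hp | hp
      · right; left; rw [if_pos h]; exact hp.neg_one_pow
      · right; right; rw [if_pos h]; exact hp.neg_one_pow
    · left; rw [if_neg h]
  -- spectrum of A
  have hSne : S.Nonempty := by
    rw [← Finset.card_pos, hScard]
    exact Nat.choose_pos (by omega)
  have hScne : Sc.Nonempty := by
    rw [← Finset.card_pos, hSccard]
    exact Nat.choose_pos (by omega)
  have hspec : spectrum ℝ (Ajohnson n (e + 1))
      = {-((e : ℝ) + 1), (n : ℝ) - ((e : ℝ) + 1)} := by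
    rw [herm_spectrum hA, ← hlam]
    ext x
    simp only [Set.mem_range, Set.mem_insert_iff, Set.mem_singleton_iff]
    constructor
    · rintro ⟨i, rfl⟩
      rcases hdich i with h | h
      · left; exact h
      · right; exact h
    · rintro (rfl | rfl)
      · obtain ⟨i, hi⟩ := hScne
        exact ⟨i, hScval i hi⟩
      · obtain ⟨i, hi⟩ := hSne
        rw [hS] at hi
        exact ⟨i, (Finset.mem_filter.mp hi).2⟩
  have hncard : (spectrum ℝ (Ajohnson n (e + 1))).ncard = 2 := by
    rw [hspec]
    apply Set.ncard_pair
    intro h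
    apply hnR
    linarith [h]
  -- an edge of the Johnson graph
  obtain ⟨s0, hs0sub, hs0⟩ := Finset.exists_subset_card_eq
    (show e ≤ #(univ : Finset (Fin n)) by rw [Finset.card_univ, Fintype.card_fin]; omega)
  have hcompl : 1 < #(s0ᶜ) := by
    rw [Finset.card_compl, hs0, Fintype.card_fin]; omega
  obtain ⟨u, hu, v, hv, huv⟩ := Finset.one_lt_card.mp hcompl
  rw [Finset.mem_compl] at hu hv
  set αv : {s : Finset (Fin n) // s.card = e + 1} :=
    ⟨insert u s0, by rw [Finset.card_insert_of_notMem hu, hs0]⟩ with hαv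
  set βv : {s : Finset (Fin n) // s.card = e + 1} :=
    ⟨insert v s0, by rw [Finset.card_insert_of_notMem hv, hs0]⟩ with hβv
  have hαβ : αv ≠ βv := by
    intro h
    have : u ∈ insert v s0 := by
      rw [hαv] at h
      have h2 := congrArg (fun x : {s : Finset (Fin n) // s.card = e + 1} => x.1) h
      simp only at h2
      rw [show insert v s0 = βv.1 from rfl, ← h2]
      exact Finset.mem_insert_self u s0
    rcases Finset.mem_insert.mp this with h' | h'
    · exact huv h'
    · exact hu h'
  have hadj : (Johnson n (e + 1)).Adj αv βv := by
    show (symmDiff (insert u s0) (insert v s0)).card = 2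
    have hsd : symmDiff (insert u s0) (insert v s0) = {u, v} := by
      ext a
      simp only [Finset.mem_symmDiff, Finset.mem_insert, Finset.mem_singleton]
      constructor
      · rintro (⟨h1 | h1, h2⟩ | ⟨h1 | h1, h2⟩)
        · exact Or.inl h1
        · exact absurd (Or.inr h1) h2
        · exact Or.inr h1
        · exact absurd (Or.inr h1) h2
      · rintro (rfl | rfl)
        · exact Or.inl ⟨Or.inl rfl, by rintro (h | h); exact huv h; exact hu h⟩
        · exact Or.inr ⟨Or.inl rfl, by rintro (h | h); exact huv h.symm; exact hv h⟩
    rw [hsd, Finset.card_pair huv]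
  -- lower bound for minQ
  have hlow : ∀ M ∈ Sset (Johnson n (e + 1)), 2 ≤ (spectrum ℝ M).ncard := by
    intro M hM
    have hMH : M.IsHermitian := by
      rw [Matrix.IsHermitian, Matrix.conjTranspose_eq_transpose_of_trivial]
      exact hM.1
    have hMsp := herm_spectrum hMH
    have hfin : (spectrum ℝ M).Finite := by rw [hMsp]; exact Set.finite_range _
    have hnemp : (spectrum ℝ M).Nonempty := by
      rw [hMsp]; exact ⟨_, ⟨αv, rfl⟩⟩
    by_contra hlt
    push_neg at hlt
    have h1 : (spectrum ℝ M).ncard = 1 := by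
      have := (Set.ncard_pos hfin).mpr hnemp
      omega
    obtain ⟨c0, hc0⟩ := Set.ncard_eq_one.mp h1
    have hall : ∀ i, hMH.eigenvalues i = c0 := by
      intro i
      have hmem : hMH.eigenvalues i ∈ spectrum ℝ M := by rw [hMsp]; exact ⟨i, rfl⟩
      rw [hc0] at hmem
      exact hmem
    have hM1 : M = c0 • 1 := herm_const_of_singleton hMH hall
    have hMne := (hM.2 αv βv hαβ).mpr hadj
    apply hMne
    rw [hM1, Matrix.smul_apply, Matrix.one_apply_ne hαβ, smul_zero]
  have hminq : minQ (Johnson n (e + 1)) = 2 := by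
    have h2mem : (2 : ℕ) ∈ {k : ℕ | ∃ M ∈ Sset (Johnson n (e + 1)),
        (spectrum ℝ M).ncard = k} := ⟨Ajohnson n (e + 1), hSset, hncard⟩
    unfold minQ
    apply le_antisymm
    · exact Nat.sInf_le h2mem
    · apply le_csInf ⟨2, h2mem⟩
      rintro k ⟨M, hM, rfl⟩
      exact hlow M hM
  refine ⟨?_, ?_, ?_, hSset, hentries, hminq⟩
  · rw [hcast]
    exact hquad
  · rw [hcast, show e + 1 - 1 = e from rfl]
    exact hrank
  · rw [hcast, show e + 1 - 1 = e from rfl]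
    exact hcp
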